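/- Sharper descent bound of the loss-weighted gradient flow at a zero-loss minimizer (Proposition A.1): assume each ℓ_i is nonnegative and there is θ* ∈ E with ℓ_i(θ*) = 0 for every i. Let θ : [0,∞) → E be differentiable with ∑_{j=1}^n ℓ_j(θ(u)) > 0 for all u ≥ 0 and θ′(u) = −∑_{i=1}^n p_i(u)·∇ℓ_i(θ(u)) where p_i(u) = ℓ_i(θ(u)) / ∑_{j=1}^n ℓ_j(θ(u)). Then for every u ≥ 0, the derivative at u of v ↦ ‖θ(v) − θ*‖² is at most −2·( L̂_n(θ(u)) + Δ(u) ), where Δ(u) := ∑_{i=1}^n ( p_i(u) − 1/n )·ℓ_i(θ(u)) = ∑_i ℓ_i(θ(u))² / ∑_j ℓ_j(θ(u)) − L̂_n(θ(u)) ≥ 0. -/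

import Mathlib

open scoped RealInnerProductSpace

lemma convex_grad_ineq' {E : Type*} [NormedAddCommGroup E] [InnerProductSpace ℝ E] [CompleteSpace E]
    {f : E → ℝ} (hf : ConvexOn ℝ Set.univ f) {x gx : E} (hg : HasGradientAt f gx x) (y : E) :
    f x + ⟪gx, y - x⟫ ≤ f y := by
  have h1 : HasDerivAt (fun t : ℝ => ((1:ℝ) - t) • x) ((-1 : ℝ) • x) 0 :=
    ((hasDerivAt_id (0:ℝ)).const_sub 1).smul_const x
  have h2 : HasDerivAt (fun t : ℝ => t • y) ((1:ℝ) • y) 0 :=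
    (hasDerivAt_id (0:ℝ)).smul_const y
  have hc : HasDerivAt (fun t : ℝ => (AffineMap.lineMap x y) t) (y - x) 0 := by
    simp only [AffineMap.lineMap_apply_module]
    have := h1.add h2
    simp only [neg_smul, one_smul] at this
    convert this using 1
    · rfl
    · abel
  have hfd := hg.hasFDerivAt
  have hc0 : (AffineMap.lineMap x y) (0:ℝ) = x := by simp
  have hφ : HasDerivAt (fun t : ℝ => f ((AffineMap.lineMap x y) t)) ⟪gx, y - x⟫ 0 := by
    have := (hc0 ▸ hfd).comp_hasDerivAt 0 hc
    simp [InnerProductSpace.toDual_apply_apply] at this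
    exact this
  have hφc : ConvexOn ℝ Set.univ (f ∘ (AffineMap.lineMap (k := ℝ) x y)) := by
    have h : ConvexOn ℝ ((AffineMap.lineMap (k := ℝ) x y) ⁻¹' Set.univ)
        (f ∘ (AffineMap.lineMap (k := ℝ) x y)) := hf.comp_affineMap _
    simpa using h
  have hs := hφc.le_slope_of_hasDerivAt (Set.mem_univ (0:ℝ)) (Set.mem_univ (1:ℝ))
    zero_lt_one hφ
  rw [slope_def_field] at hs
  simp only [Function.comp_apply, AffineMap.lineMap_apply_one, AffineMap.lineMap_apply_zero,
    sub_zero, div_one] at hs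
  linarith

/-- Sharper descent bound of the loss-weighted gradient flow at a zero-loss minimizer
(Proposition A.1), with the gap Δ(u) nonnegative and equal to the self-weighted minus
uniform average of losses. -/
theorem loss_weighted_gradient_flow_sharper_descent
    {E : Type*} [NormedAddCommGroup E] [InnerProductSpace ℝ E] [CompleteSpace E]
    (n : ℕ) (hn : 1 ≤ n) (ℓ : Fin n → E → ℝ) (g : Fin n → E → E)
    (hconv : ∀ i, ConvexOn ℝ Set.univ (ℓ i))
    (hgrad : ∀ i x, HasGradientAt (ℓ i) (g i x) x)
    (hnn : ∀ i x, 0 ≤ ℓ i x)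
    (θs : E) (hzero : ∀ i, ℓ i θs = 0)
    (θ : ℝ → E)
    (hpos : ∀ u : ℝ, 0 ≤ u → 0 < ∑ j, ℓ j (θ u))
    (hθ : ∀ u : ℝ, 0 ≤ u →
      HasDerivAt θ (-(∑ i, (ℓ i (θ u) / ∑ j, ℓ j (θ u)) • g i (θ u))) u) :
    ∀ u : ℝ, 0 ≤ u →
      0 ≤ ∑ i, (ℓ i (θ u) / (∑ j, ℓ j (θ u)) - 1 / (n : ℝ)) * ℓ i (θ u) ∧
      ∑ i, (ℓ i (θ u) / (∑ j, ℓ j (θ u)) - 1 / (n : ℝ)) * ℓ i (θ u) =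
        (∑ i, (ℓ i (θ u)) ^ 2) / (∑ j, ℓ j (θ u)) - (1 / (n : ℝ)) * ∑ i, ℓ i (θ u) ∧
      deriv (fun v => ‖θ v - θs‖ ^ 2) u ≤
        -2 * ((1 / (n : ℝ)) * ∑ i, ℓ i (θ u) +
          ∑ i, (ℓ i (θ u) / (∑ j, ℓ j (θ u)) - 1 / (n : ℝ)) * ℓ i (θ u)) := by
  intro u hu
  have hS : (0:ℝ) < ∑ j, ℓ j (θ u) := hpos u hu
  have hnR : (0:ℝ) < n := by exact_mod_cast Nat.lt_of_lt_of_le Nat.zero_lt_one hn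
  set S : ℝ := ∑ j, ℓ j (θ u) with hSdef
  -- the equality
  have heq : ∑ i, (ℓ i (θ u) / S - 1 / (n : ℝ)) * ℓ i (θ u)
      = (∑ i, (ℓ i (θ u)) ^ 2) / S - (1 / (n : ℝ)) * ∑ i, ℓ i (θ u) := by
    simp only [sub_mul, Finset.sum_sub_distrib]
    congr 1
    · rw [Finset.sum_div]
      exact Finset.sum_congr rfl fun i _ => by rw [div_mul_eq_mul_div, sq]
    · rw [Finset.mul_sum]
  -- Cauchy-Schwarz
  have hCS : (∑ i, ℓ i (θ u)) ^ 2 ≤ (n : ℝ) * ∑ i, (ℓ i (θ u)) ^ 2 := by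
    have := sq_sum_le_card_mul_sum_sq (s := Finset.univ) (f := fun i => ℓ i (θ u))
    simpa using this
  have hnonneg : 0 ≤ ∑ i, (ℓ i (θ u) / S - 1 / (n : ℝ)) * ℓ i (θ u) := by
    rw [heq, sub_nonneg, one_div, inv_mul_eq_div, div_le_div_iff₀ hnR hS]
    nlinarith [hCS]
  refine ⟨hnonneg, heq, ?_⟩
  -- derivative part
  set w : E := θ u - θs with hw
  set D : E := -(∑ i, (ℓ i (θ u) / S) • g i (θ u)) with hD
  have hd : HasDerivAt (fun v => θ v - θs) D u := (hθ u hu).sub_const θs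
  have hdi := HasDerivAt.inner ℝ hd hd
  have hnorm : HasDerivAt (fun v => ‖θ v - θs‖ ^ 2) (⟪w, D⟫ + ⟪D, w⟫) u := by
    have hfe : (fun v => ‖θ v - θs‖ ^ 2) = fun v => ⟪θ v - θs, θ v - θs⟫ :=
      funext fun v => (real_inner_self_eq_norm_sq _).symm
    rw [hfe]
    exact hdi
  rw [hnorm.deriv]
  have hDw : ⟪D, w⟫ = -∑ i, (ℓ i (θ u) / S) * ⟪g i (θ u), w⟫ := by
    rw [hD, inner_neg_left, sum_inner]
    congr 1
    exact Finset.sum_congr rfl fun i _ => real_inner_smul_left _ _ _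
  have hge : ∀ i, ℓ i (θ u) ≤ ⟪g i (θ u), w⟫ := by
    intro i
    have h := convex_grad_ineq' (hconv i) (hgrad i (θ u)) θs
    rw [hzero i] at h
    have : θs - θ u = -w := by rw [hw]; abel
    rw [this, inner_neg_right] at h
    linarith
  have hsum : ∑ i, (ℓ i (θ u) / S) * ℓ i (θ u) ≤ ∑ i, (ℓ i (θ u) / S) * ⟪g i (θ u), w⟫ :=
    Finset.sum_le_sum fun i _ =>
      mul_le_mul_of_nonneg_left (hge i) (div_nonneg (hnn i _) hS.le)
  have hsplit : (1 / (n : ℝ)) * ∑ i, ℓ i (θ u)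
      + ∑ i, (ℓ i (θ u) / S - 1 / (n : ℝ)) * ℓ i (θ u)
      = ∑ i, (ℓ i (θ u) / S) * ℓ i (θ u) := by
    rw [Finset.mul_sum, ← Finset.sum_add_distrib]
    exact Finset.sum_congr rfl fun i _ => by ring
  have hcomm : ⟪w, D⟫ = ⟪D, w⟫ := real_inner_comm _ _
  rw [hcomm, hDw, hsplit]
  linarith [hsum]
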